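/- (Lemma 1, part 1.) For an HMM on X = E^d with E ⊂ ℝ compact, satisfying assumption A1 (uniform upper and lower bounds on g(x', y_p) f(x, x')), the joint densities of the first j coordinates of the time-0 smoother are uniformly bounded above and below: there exist 0 < C' ≤ C < ∞ such that for all 1 ≤ j ≤ d and all p ≥ 0, C' ≤ π_{p,0}(x_{0,1:j}) ≤ C for all x_{0,1:j} ∈ E^j. -/

import Mathlib

open MeasureTheory Set

/-- The box `E^d` inside `Fin d → ℝ`. -/
def box (d : ℕ) (E : Set ℝ) : Set (Fin d → ℝ) := Set.univ.pi fun _ => E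

/-- Backward functional of the multidimensional HMM on `X = E^d`. -/
noncomputable def mback (d : ℕ) (E : Set ℝ) (f : (Fin d → ℝ) → (Fin d → ℝ) → ℝ)
    (g : ℕ → (Fin d → ℝ) → ℝ) : ℕ → ℕ → (Fin d → ℝ) → ℝ
  | 0, _, _ => 1
  | m + 1, k, x => ∫ z in box d E, f x z * g (k + 1) z * mback d E f g m (k + 1) z

/-- Density of the time-0 smoother `π_{p,0}` on `E^d` (observations absorbed in `g`). -/
noncomputable def msmootherDen (d : ℕ) (E : Set ℝ) (f0 : (Fin d → ℝ) → ℝ)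
    (f : (Fin d → ℝ) → (Fin d → ℝ) → ℝ) (g : ℕ → (Fin d → ℝ) → ℝ) (p : ℕ)
    (x : Fin d → ℝ) : ℝ :=
  f0 x * g 0 x * mback d E f g p 0 x / ∫ y in box d E, f0 y * g 0 y * mback d E f g p 0 y

/-- Marginal density in the first `j` coordinates of a density `π` on `E^d`
(the redundant integration over the first `j` coordinates is compensated by dividing
by `|E|^j`). -/
noncomputable def marg (d : ℕ) (E : Set ℝ) (π : (Fin d → ℝ) → ℝ) (j : ℕ)
    (x : Fin d → ℝ) : ℝ :=
  (∫ z in box d E, π (fun i => if (i : ℕ) < j then x i else z i)) / (volume E).toReal ^ j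

namespace Stmt7Aux

lemma mem_box {d : ℕ} {E : Set ℝ} {x : Fin d → ℝ} : x ∈ box d E ↔ ∀ i, x i ∈ E := by
  simp [box]

lemma box_meas (d : ℕ) (a b : ℝ) : MeasurableSet (box d (Set.Icc a b)) :=
  MeasurableSet.univ_pi fun _ => measurableSet_Icc

lemma box_vol (d : ℕ) {a b : ℝ} (hab : a ≤ b) :
    (volume (box d (Set.Icc a b))).toReal = (b - a) ^ d := by
  rw [box, volume_pi_pi]
  simp only [Real.volume_Icc, Finset.prod_const, Finset.card_univ, Fintype.card_fin]
  rw [ENNReal.toReal_pow, ENNReal.toReal_ofReal (by linarith)]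

lemma box_vol_ne_top (d : ℕ) (a b : ℝ) : volume (box d (Set.Icc a b)) ≠ ⊤ := by
  rw [box, volume_pi_pi]
  simp only [Real.volume_Icc, Finset.prod_const, Finset.card_univ, Fintype.card_fin]
  exact ENNReal.pow_ne_top ENNReal.ofReal_ne_top

lemma integrableOn_of_bound {α : Type*} [MeasurableSpace α] {μ : Measure α} {s : Set α}
    (hs : MeasurableSet s) (hμ : μ s ≠ ⊤) {h : α → ℝ} (hm : Measurable h)
    (M : ℝ) (hb : ∀ z ∈ s, |h z| ≤ M) : IntegrableOn h s μ :=
  Measure.integrableOn_of_bounded hμ hm.aestronglyMeasurable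
    ((ae_restrict_iff' hs).2 (ae_of_all _ fun z hz => by simpa using hb z hz))

lemma mback_meas (d : ℕ) (E : Set ℝ) (f : (Fin d → ℝ) → (Fin d → ℝ) → ℝ)
    (g : ℕ → (Fin d → ℝ) → ℝ) (hf : Measurable (Function.uncurry f))
    (hg : ∀ p, Measurable (g p)) : ∀ m k, Measurable (mback d E f g m k) := by
  intro m
  induction m with
  | zero => intro k; exact measurable_const
  | succ m ih =>
    intro k
    have h1 : Measurable (fun q : (Fin d → ℝ) × (Fin d → ℝ) =>
        f q.1 q.2 * g (k + 1) q.2 * mback d E f g m (k + 1) q.2) :=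
      (hf.mul ((hg (k + 1)).comp measurable_snd)).mul ((ih (k + 1)).comp measurable_snd)
    exact h1.stronglyMeasurable.integral_prod_right'.measurable

lemma pow_between {t : ℝ} (ht : 0 < t) {j d : ℕ} (hj : 1 ≤ j) (hjd : j ≤ d) :
    min t (t ^ d) ≤ t ^ j ∧ t ^ j ≤ max t (t ^ d) := by
  rcases le_total t 1 with h | h
  · refine ⟨(min_le_right _ _).trans (pow_le_pow_of_le_one ht.le h hjd), ?_⟩
    calc t ^ j ≤ t ^ 1 := pow_le_pow_of_le_one ht.le h hj
      _ = t := pow_one t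
      _ ≤ max t (t ^ d) := le_max_left _ _
  · constructor
    · calc min t (t ^ d) ≤ t := min_le_left _ _
        _ = t ^ 1 := (pow_one t).symm
        _ ≤ t ^ j := pow_le_pow_right₀ h hj
    · exact (pow_le_pow_right₀ h hjd).trans (le_max_right _ _)

end Stmt7Aux

theorem stmt7 (d : ℕ) (hd : 1 ≤ d) (a b : ℝ) (hab : a < b)
    (f0 : (Fin d → ℝ) → ℝ) (f : (Fin d → ℝ) → (Fin d → ℝ) → ℝ)
    (g : ℕ → (Fin d → ℝ) → ℝ)
    (hf0 : Measurable f0) (hf : Measurable (Function.uncurry f))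
    (hg : ∀ p, Measurable (g p))
    (Cl Cu : ℝ) (hCl : 0 < Cl) (hClu : Cl < Cu)
    (hA1_0 : ∀ x ∈ box d (Set.Icc a b), Cl ≤ g 0 x * f0 x ∧ g 0 x * f0 x ≤ Cu)
    (hA1 : ∀ p : ℕ, 1 ≤ p → ∀ x ∈ box d (Set.Icc a b), ∀ x' ∈ box d (Set.Icc a b),
      Cl ≤ g p x' * f x x' ∧ g p x' * f x x' ≤ Cu) :
    ∃ (C C' : ℝ), 0 < C' ∧ C' ≤ C ∧
      ∀ j : ℕ, 1 ≤ j → j ≤ d → ∀ p : ℕ, ∀ x ∈ box d (Set.Icc a b),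
        C' ≤ marg d (Set.Icc a b) (msmootherDen d (Set.Icc a b) f0 f g p) j x ∧
          marg d (Set.Icc a b) (msmootherDen d (Set.Icc a b) f0 f g p) j x ≤ C := by
  set E := Set.Icc a b with hE
  set B := box d E with hB
  have hBm : MeasurableSet B := Stmt7Aux.box_meas d a b
  have hBt : volume B ≠ ⊤ := Stmt7Aux.box_vol_ne_top d a b
  set V : ℝ := (b - a) ^ d with hVdef
  have hVvol : (volume B).toReal = V := Stmt7Aux.box_vol d hab.le
  have hba : (0:ℝ) < b - a := by linarith
  have hV : 0 < V := pow_pos hba d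
  have hCu : 0 < Cu := hCl.trans hClu
  set r : ℝ := Cu / Cl with hrdef
  have hr1 : 1 ≤ r := (one_le_div hCl).2 hClu.le
  have hr0 : 0 < r := lt_of_lt_of_le one_pos hr1
  have hrc : r * Cl = Cu := by rw [hrdef, div_mul_cancel₀ _ hCl.ne']
  have mbmeas := Stmt7Aux.mback_meas d E f g hf hg
  -- bounds on mback
  have mback_bounds : ∀ m k, ∀ x ∈ B,
      (Cl * V) ^ m ≤ mback d E f g m k x ∧ mback d E f g m k x ≤ (Cu * V) ^ m := by
    intro m
    induction m with
    | zero => intro k x hx; simp [mback]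
    | succ m ih =>
      intro k x hx
      have hint : ∀ z ∈ B, Cl * (Cl * V) ^ m ≤ f x z * g (k + 1) z * mback d E f g m (k + 1) z ∧
          f x z * g (k + 1) z * mback d E f g m (k + 1) z ≤ Cu * (Cu * V) ^ m := by
        intro z hz
        obtain ⟨h1, h2⟩ := hA1 (k + 1) (Nat.le_add_left 1 k) x hx z hz
        obtain ⟨h3, h4⟩ := ih (k + 1) z hz
        have hnn : (0:ℝ) ≤ (Cl * V) ^ m := by positivity
        constructor
        · nlinarith
        · nlinarith [pow_nonneg (mul_pos hCu hV).le m]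
      have hmeasz : Measurable (fun z => f x z * g (k + 1) z * mback d E f g m (k + 1) z) :=
        ((hf.comp measurable_prodMk_left).mul (hg (k + 1))).mul (mbmeas m (k + 1))
      have hintg : IntegrableOn (fun z => f x z * g (k + 1) z * mback d E f g m (k + 1) z) B := by
        refine Stmt7Aux.integrableOn_of_bound hBm hBt hmeasz (Cu * (Cu * V) ^ m) ?_
        intro z hz
        have h1 := (hint z hz).1
        have h2 := (hint z hz).2
        have h3 : (0:ℝ) ≤ Cl * (Cl * V) ^ m := by positivity
        rw [abs_le]; exact ⟨by nlinarith, h2⟩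
      have hconst_lo : IntegrableOn (fun _ : Fin d → ℝ => Cl * (Cl * V) ^ m) B :=
        integrableOn_const hBt
      have hconst_hi : IntegrableOn (fun _ : Fin d → ℝ => Cu * (Cu * V) ^ m) B :=
        integrableOn_const hBt
      have heq : mback d E f g (m + 1) k x
          = ∫ z in B, f x z * g (k + 1) z * mback d E f g m (k + 1) z := rfl
      constructor
      · rw [heq]
        calc (Cl * V) ^ (m + 1) = (volume B).toReal • (Cl * (Cl * V) ^ m) := by
              rw [hVvol]; simp only [smul_eq_mul]; ring
          _ = ∫ _ in B, Cl * (Cl * V) ^ m := (setIntegral_const _).symm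
          _ ≤ _ := setIntegral_mono_on hconst_lo hintg hBm (fun z hz => (hint z hz).1)
      · rw [heq]
        calc (∫ z in B, f x z * g (k + 1) z * mback d E f g m (k + 1) z)
            ≤ ∫ _ in B, Cu * (Cu * V) ^ m :=
              setIntegral_mono_on hintg hconst_hi hBm (fun z hz => (hint z hz).2)
          _ = (Cu * V) ^ (m + 1) := by
              rw [setIntegral_const, measureReal_def, hVvol]; simp only [smul_eq_mul]; ring
  -- ratio bound on mback
  have mback_ratio : ∀ m k, ∀ x ∈ B, ∀ y ∈ B,
      mback d E f g m k x ≤ r * mback d E f g m k y := by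
    intro m
    match m with
    | 0 => intro k x hx y hy; simpa [mback] using hr1
    | m + 1 =>
      intro k x hx y hy
      have hint : ∀ z ∈ B, f x z * g (k + 1) z * mback d E f g m (k + 1) z ≤
          r * (f y z * g (k + 1) z * mback d E f g m (k + 1) z) := by
        intro z hz
        obtain ⟨h1, h2⟩ := hA1 (k + 1) (Nat.le_add_left 1 k) x hx z hz
        obtain ⟨h3, h4⟩ := hA1 (k + 1) (Nat.le_add_left 1 k) y hy z hz
        have h5 : (0:ℝ) ≤ mback d E f g m (k + 1) z :=
          le_trans (by positivity) (mback_bounds m (k + 1) z hz).1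
        calc f x z * g (k + 1) z * mback d E f g m (k + 1) z
            ≤ Cu * mback d E f g m (k + 1) z :=
              mul_le_mul_of_nonneg_right (by linarith) h5
          _ = r * (Cl * mback d E f g m (k + 1) z) := by rw [← hrc]; ring
          _ ≤ r * (f y z * g (k + 1) z * mback d E f g m (k + 1) z) :=
              mul_le_mul_of_nonneg_left
                (mul_le_mul_of_nonneg_right (by linarith) h5) hr0.le
      have hbnd : ∀ w, w ∈ B → ∀ z ∈ B,
          |f w z * g (k + 1) z * mback d E f g m (k + 1) z| ≤ Cu * (Cu * V) ^ m := by
        intro w hw z hz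
        obtain ⟨h1, h2⟩ := hA1 (k + 1) (Nat.le_add_left 1 k) w hw z hz
        obtain ⟨h3, h4⟩ := mback_bounds m (k + 1) z hz
        have hnn : (0:ℝ) ≤ (Cl * V) ^ m := by positivity
        have hnn2 : (0:ℝ) ≤ (Cu * V) ^ m := by positivity
        rw [abs_le]; constructor <;> nlinarith
      have hmx : Measurable (fun z => f x z * g (k + 1) z * mback d E f g m (k + 1) z) :=
        ((hf.comp measurable_prodMk_left).mul (hg (k + 1))).mul (mbmeas m (k + 1))
      have hmy : Measurable (fun z => r * (f y z * g (k + 1) z * mback d E f g m (k + 1) z)) :=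
        measurable_const.mul
          (((hf.comp measurable_prodMk_left).mul (hg (k + 1))).mul (mbmeas m (k + 1)))
      have hix : IntegrableOn (fun z => f x z * g (k + 1) z * mback d E f g m (k + 1) z) B :=
        Stmt7Aux.integrableOn_of_bound hBm hBt hmx _ (hbnd x hx)
      have hiy : IntegrableOn
          (fun z => r * (f y z * g (k + 1) z * mback d E f g m (k + 1) z)) B := by
        refine Stmt7Aux.integrableOn_of_bound hBm hBt hmy (r * (Cu * (Cu * V) ^ m)) ?_
        intro z hz
        rw [abs_mul, abs_of_pos hr0]
        exact mul_le_mul_of_nonneg_left (hbnd y hy z hz) hr0.le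
      have heqx : mback d E f g (m + 1) k x
          = ∫ z in B, f x z * g (k + 1) z * mback d E f g m (k + 1) z := rfl
      have heqy : mback d E f g (m + 1) k y
          = ∫ z in B, f y z * g (k + 1) z * mback d E f g m (k + 1) z := rfl
      rw [heqx, heqy, ← integral_const_mul]
      exact setIntegral_mono_on hix hiy hBm hint
  -- the unnormalized numerator
  set N : ℕ → (Fin d → ℝ) → ℝ := fun p x => f0 x * g 0 x * mback d E f g p 0 x with hNdef
  have hNmeas : ∀ p, Measurable (N p) := fun p => (hf0.mul (hg 0)).mul (mbmeas p 0)
  have hmbnn : ∀ p, ∀ x ∈ B, (0:ℝ) ≤ mback d E f g p 0 x := fun p x hx =>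
    le_trans (by positivity) (mback_bounds p 0 x hx).1
  have hNlo : ∀ p, ∀ x ∈ B, Cl * (Cl * V) ^ p ≤ N p x := by
    intro p x hx
    obtain ⟨h1, h2⟩ := hA1_0 x hx
    obtain ⟨h3, h4⟩ := mback_bounds p 0 x hx
    have h5 := mul_le_mul h1 h3 (by positivity) (le_trans hCl.le h1)
    simp only [hNdef]; linarith
  have hNhi : ∀ p, ∀ x ∈ B, N p x ≤ Cu * (Cu * V) ^ p := by
    intro p x hx
    obtain ⟨h1, h2⟩ := hA1_0 x hx
    obtain ⟨h3, h4⟩ := mback_bounds p 0 x hx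
    have h5 := mul_le_mul h2 h4 (hmbnn p x hx) hCu.le
    simp only [hNdef]; linarith
  have hNratio : ∀ p, ∀ x ∈ B, ∀ y ∈ B, N p x ≤ r ^ 2 * N p y := by
    intro p x hx y hy
    obtain ⟨h1, h2⟩ := hA1_0 x hx
    obtain ⟨h3, h4⟩ := hA1_0 y hy
    have h5 := mback_ratio p 0 x hx y hy
    have h6 := hmbnn p y hy
    have h7 := hmbnn p x hx
    simp only [hNdef]
    calc f0 x * g 0 x * mback d E f g p 0 x ≤ Cu * mback d E f g p 0 x :=
          mul_le_mul_of_nonneg_right (by linarith) h7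
      _ ≤ Cu * (r * mback d E f g p 0 y) := mul_le_mul_of_nonneg_left h5 hCu.le
      _ = r ^ 2 * (Cl * mback d E f g p 0 y) := by rw [← hrc]; ring
      _ ≤ r ^ 2 * (f0 y * g 0 y * mback d E f g p 0 y) := by
          refine mul_le_mul_of_nonneg_left ?_ (by positivity)
          exact mul_le_mul_of_nonneg_right (by linarith) h6
  have hNint : ∀ p, IntegrableOn (N p) B := by
    intro p
    refine Stmt7Aux.integrableOn_of_bound hBm hBt (hNmeas p) (Cu * (Cu * V) ^ p) ?_
    intro z hz
    have h1 := hNlo p z hz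
    have h2 := hNhi p z hz
    have h3 : (0:ℝ) ≤ Cl * (Cl * V) ^ p := by positivity
    have h4 : (0:ℝ) ≤ Cu * (Cu * V) ^ p := by positivity
    rw [abs_le]; exact ⟨by linarith, h2⟩
  set D : ℕ → ℝ := fun p => ∫ y in B, N p y with hDdef
  have hDlo : ∀ p, ∀ x ∈ B, V * (N p x / r ^ 2) ≤ D p := by
    intro p x hx
    have hconst : IntegrableOn (fun _ : Fin d → ℝ => N p x / r ^ 2) B :=
      integrableOn_const hBt
    calc V * (N p x / r ^ 2) = (volume B).toReal • (N p x / r ^ 2) := by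
          rw [hVvol]; simp [smul_eq_mul]
      _ = ∫ _ in B, N p x / r ^ 2 := (setIntegral_const _).symm
      _ ≤ D p := setIntegral_mono_on hconst (hNint p) hBm (fun y hy => by
          have h1 := hNratio p x hx y hy
          have hr2 : (0:ℝ) < r ^ 2 := by positivity
          rw [div_le_iff₀ hr2]; linarith)
  have hDhi : ∀ p, ∀ x ∈ B, D p ≤ V * (r ^ 2 * N p x) := by
    intro p x hx
    have hconst : IntegrableOn (fun _ : Fin d → ℝ => r ^ 2 * N p x) B :=
      integrableOn_const hBt
    calc D p ≤ ∫ _ in B, r ^ 2 * N p x :=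
          setIntegral_mono_on (hNint p) hconst hBm (fun y hy => hNratio p y hy x hx)
      _ = V * (r ^ 2 * N p x) := by rw [setIntegral_const, measureReal_def, hVvol]; simp [smul_eq_mul]
  have hNpos : ∀ p, ∀ x ∈ B, 0 < N p x := fun p x hx =>
    lt_of_lt_of_le (by positivity) (hNlo p x hx)
  obtain ⟨x0, hx0⟩ : ∃ x0, x0 ∈ B :=
    ⟨fun _ => a, Stmt7Aux.mem_box.2 fun _ => ⟨le_refl a, hab.le⟩⟩
  have hDpos : ∀ p, 0 < D p := by
    intro p
    have h1 := hNpos p x0 hx0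
    have h2 : 0 < V * (N p x0 / r ^ 2) := by positivity
    exact lt_of_lt_of_le h2 (hDlo p x0 hx0)
  -- pointwise bounds on the smoother density on B
  have hπlo : ∀ p, ∀ x ∈ B, 1 / (r ^ 2 * V) ≤ msmootherDen d E f0 f g p x := by
    intro p x hx
    have h1 : msmootherDen d E f0 f g p x = N p x / D p := rfl
    rw [h1, div_le_div_iff₀ (by positivity) (hDpos p)]
    have h2 := hDhi p x hx
    nlinarith
  have hπhi : ∀ p, ∀ x ∈ B, msmootherDen d E f0 f g p x ≤ r ^ 2 / V := by
    intro p x hx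
    have h1 : msmootherDen d E f0 f g p x = N p x / D p := rfl
    have hr2 : (0:ℝ) < r ^ 2 := by positivity
    have h2 : V * N p x ≤ r ^ 2 * D p := by
      have h3 := hDlo p x hx
      have h4 := mul_le_mul_of_nonneg_left h3 hr2.le
      have h5 : r ^ 2 * (V * (N p x / r ^ 2)) = V * N p x := by field_simp
      linarith
    rw [h1, div_le_div_iff₀ (hDpos p) hV]
    nlinarith
  have hπmeas : ∀ p, Measurable (msmootherDen d E f0 f g p) := fun p =>
    (hNmeas p).div_const (D p)
  -- conclusion
  have hmin : 0 < min (b - a) ((b - a) ^ d) := lt_min hba (pow_pos hba d)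
  have hmax : 0 < max (b - a) ((b - a) ^ d) := lt_of_lt_of_le hba (le_max_left _ _)
  have hminmax : min (b - a) ((b - a) ^ d) ≤ max (b - a) ((b - a) ^ d) :=
    (min_le_left _ _).trans (le_max_left _ _)
  have hEvol : (volume E).toReal = b - a := by
    rw [hE, Real.volume_Icc, ENNReal.toReal_ofReal (by linarith)]
  refine ⟨r ^ 2 / min (b - a) ((b - a) ^ d), (1 / r ^ 2) / max (b - a) ((b - a) ^ d),
    div_pos (by positivity) hmax, ?_, ?_⟩
  · have h1r : 1 / r ^ 2 ≤ r ^ 2 := by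
      rw [div_le_iff₀ (by positivity : (0:ℝ) < r ^ 2)]
      have h2 : 1 ≤ r ^ 2 := by nlinarith
      nlinarith [h2]
    calc (1 / r ^ 2) / max (b - a) ((b - a) ^ d)
        ≤ r ^ 2 / max (b - a) ((b - a) ^ d) := by gcongr
      _ ≤ r ^ 2 / min (b - a) ((b - a) ^ d) := by
          exact div_le_div_of_nonneg_left (by positivity) hmin hminmax
  · intro j hj hjd p x hx
    have hφmem : ∀ z ∈ B, ((fun i => if (i : ℕ) < j then x i else z i) : Fin d → ℝ) ∈ B := by
      intro z hz
      refine Stmt7Aux.mem_box.2 fun i => ?_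
      by_cases h : (i : ℕ) < j
      · simpa [h] using Stmt7Aux.mem_box.1 hx i
      · simpa [h] using Stmt7Aux.mem_box.1 hz i
    have hφmeas : Measurable
        (fun z : Fin d → ℝ => (fun i => if (i : ℕ) < j then x i else z i : Fin d → ℝ)) := by
      apply measurable_pi_lambda
      intro i
      by_cases h : (i : ℕ) < j
      · simp only [h, if_true]; exact measurable_const
      · simp only [h, if_false]; exact measurable_pi_apply i
    set ψ : (Fin d → ℝ) → ℝ :=
      fun z => msmootherDen d E f0 f g p (fun i => if (i : ℕ) < j then x i else z i) with hψdef
    have hψmeas : Measurable ψ := (hπmeas p).comp hφmeas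
    have hψlo : ∀ z ∈ B, 1 / (r ^ 2 * V) ≤ ψ z := fun z hz => hπlo p _ (hφmem z hz)
    have hψhi : ∀ z ∈ B, ψ z ≤ r ^ 2 / V := fun z hz => hπhi p _ (hφmem z hz)
    have hψint : IntegrableOn ψ B := by
      refine Stmt7Aux.integrableOn_of_bound hBm hBt hψmeas (r ^ 2 / V) ?_
      intro z hz
      have h1 := hψlo z hz
      have h2 := hψhi z hz
      have h3 : (0:ℝ) < 1 / (r ^ 2 * V) := by positivity
      have h4 : (0:ℝ) ≤ r ^ 2 / V := div_nonneg (sq_nonneg r) hV.le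
      rw [abs_le]; exact ⟨by linarith, h2⟩
    have hIlo : 1 / r ^ 2 ≤ ∫ z in B, ψ z := by
      have hconst : IntegrableOn (fun _ : Fin d → ℝ => 1 / (r ^ 2 * V)) B :=
        integrableOn_const hBt
      calc 1 / r ^ 2 = (volume B).toReal • (1 / (r ^ 2 * V)) := by
            rw [hVvol, smul_eq_mul, mul_one_div, mul_comm (r ^ 2) V, ← div_div,
              div_self hV.ne']
        _ = ∫ _ in B, 1 / (r ^ 2 * V) := (setIntegral_const _).symm
        _ ≤ ∫ z in B, ψ z := setIntegral_mono_on hconst hψint hBm hψlo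
    have hIhi : (∫ z in B, ψ z) ≤ r ^ 2 := by
      have hconst : IntegrableOn (fun _ : Fin d → ℝ => r ^ 2 / V) B :=
        integrableOn_const hBt
      calc (∫ z in B, ψ z) ≤ ∫ _ in B, r ^ 2 / V :=
            setIntegral_mono_on hψint hconst hBm hψhi
        _ = r ^ 2 := by
            rw [setIntegral_const, measureReal_def, hVvol, smul_eq_mul, mul_comm, div_mul_cancel₀ _ hV.ne']
    have hmargeq : marg d E (msmootherDen d E f0 f g p) j x = (∫ z in B, ψ z) / (b - a) ^ j := by
      unfold marg
      rw [← hB, hEvol]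
    have hpow := Stmt7Aux.pow_between hba hj hjd
    have hpj : (0:ℝ) < (b - a) ^ j := pow_pos hba j
    constructor
    · rw [hmargeq]
      calc (1 / r ^ 2) / max (b - a) ((b - a) ^ d)
          ≤ (1 / r ^ 2) / (b - a) ^ j :=
            div_le_div_of_nonneg_left (by positivity) hpj hpow.2
        _ ≤ (∫ z in B, ψ z) / (b - a) ^ j := by gcongr
    · rw [hmargeq]
      calc (∫ z in B, ψ z) / (b - a) ^ j ≤ r ^ 2 / (b - a) ^ j := by gcongr
        _ ≤ r ^ 2 / min (b - a) ((b - a) ^ d) :=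
            div_le_div_of_nonneg_left (by positivity) hmin hpow.1
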